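/- For every constant C ∈ ℝ one has the limit lim_{r→1⁻} [1 − F_*^{-1}(F_*(r)−C)]/(1−r) = e^{C·u_*'(1)}. -/

import Mathlib

open MeasureTheory Set Filter intervalIntegral Real

/- STATEMENT 2: For every constant C ∈ ℝ one has
lim_{r→1⁻} [1 − F⁻¹(F(r)−C)]/(1−r) = e^{C·u'(1)}. -/
theorem stmt_2
    (u F Finv : ℝ → ℝ) (C10 C20 : ℝ)
    (hC10 : 0 < C10) (hC20 : 0 < C20)
    (hu : ContDiffOn ℝ 1 u (Set.Icc 0 1))
    (hu_lb : ∀ r ∈ Set.Icc (0:ℝ) 1, -C10 * (r * (1 - r)) ≤ u r)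
    (hu_ub : ∀ r ∈ Set.Icc (0:ℝ) 1, u r ≤ -C20 * (r * (1 - r)))
    (hF : ∀ r ∈ Set.Ioo (0:ℝ) 1, F r = ∫ η in (1/2 : ℝ)..r, 1 / |u η|)
    (hF_mono : StrictMonoOn F (Set.Ioo 0 1))
    (hFinv_mem : ∀ x : ℝ, Finv x ∈ Set.Ioo (0:ℝ) 1)
    (hFinv_right : ∀ x : ℝ, F (Finv x) = x)
    (hFinv_left : ∀ r ∈ Set.Ioo (0:ℝ) 1, Finv (F r) = r)
    -- u'(1), which is positive, and the asymptotic assumption near r = 1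
    (u1' : ℝ) (hu1' : HasDerivWithinAt u u1' (Set.Icc 0 1) 1)
    (hu1'_pos : 0 < u1')
    (β M r₁ : ℝ) (hβ : β ∈ Set.Ioc (0:ℝ) 1) (hM : 0 < M) (hr₁ : r₁ ∈ Set.Ioo (0:ℝ) 1)
    (hasymp : ∀ r : ℝ, r₁ ≤ r → r < 1 → |u r - u1' * (r - 1)| ≤ M * (1 - r) ^ (1 + β))
    (C : ℝ) :
    Filter.Tendsto (fun r : ℝ => (1 - Finv (F r - C)) / (1 - r))
      (nhdsWithin 1 (Set.Iio 1)) (nhds (Real.exp (C * u1'))) := by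
  obtain ⟨hβ0, hβ1⟩ := hβ
  obtain ⟨hr₁0, hr₁1⟩ := hr₁
  set r₂ : ℝ := max r₁ (1/2) with hr₂def
  have hr₂half : (1/2:ℝ) ≤ r₂ := le_max_right _ _
  have hr₂0 : 0 < r₂ := lt_of_lt_of_le (by norm_num) hr₂half
  have hr₂1 : r₂ < 1 := max_lt hr₁1 (by norm_num)
  have hr₁r₂ : r₁ ≤ r₂ := le_max_left _ _
  have hr₂mem : r₂ ∈ Set.Ioo (0:ℝ) 1 := ⟨hr₂0, hr₂1⟩
  have hucont : ContinuousOn u (Set.Icc 0 1) := hu.continuousOn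
  -- u is negative on (0,1)
  have huneg : ∀ r ∈ Set.Ioo (0:ℝ) 1, u r < 0 := by
    intro r hr
    have h := hu_ub r (Set.mem_Icc_of_Ioo hr)
    have hpos : 0 < r * (1 - r) := mul_pos hr.1 (by linarith [hr.2])
    nlinarith [mul_pos hC20 hpos]
  have huabs : ∀ r ∈ Set.Ioo (0:ℝ) 1, |u r| = -u r := fun r hr =>
    abs_of_neg (huneg r hr)
  have huabs_pos : ∀ r ∈ Set.Ioo (0:ℝ) 1, 0 < |u r| := fun r hr =>
    abs_pos.mpr (ne_of_lt (huneg r hr))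
  have hu1 : u 1 = 0 := by
    have h1 := hu_lb 1 (by norm_num)
    have h2 := hu_ub 1 (by norm_num)
    nlinarith
  -- interval integrability of 1/|u| on compact subintervals of (0,1)
  have hcontinv : ∀ a ∈ Set.Ioo (0:ℝ) 1, ∀ b ∈ Set.Ioo (0:ℝ) 1,
      ContinuousOn (fun η => 1 / |u η|) (Set.uIcc a b) := by
    intro a ha b hb
    have hsub : Set.uIcc a b ⊆ Set.Ioo 0 1 := Set.ordConnected_Ioo.uIcc_subset ha hb
    exact ContinuousOn.div continuousOn_const
      ((hucont.mono (hsub.trans Set.Ioo_subset_Icc_self)).abs)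
      (fun η hη => ne_of_gt (huabs_pos η (hsub hη)))
  have hint : ∀ a ∈ Set.Ioo (0:ℝ) 1, ∀ b ∈ Set.Ioo (0:ℝ) 1,
      IntervalIntegrable (fun η => 1 / |u η|) volume a b := fun a ha b hb =>
    (hcontinv a ha b hb).intervalIntegrable
  have hhalf : (1/2 : ℝ) ∈ Set.Ioo (0:ℝ) 1 := by norm_num
  -- F difference formula
  have hFdiff : ∀ a ∈ Set.Ioo (0:ℝ) 1, ∀ b ∈ Set.Ioo (0:ℝ) 1,
      F b - F a = ∫ η in a..b, 1 / |u η| := by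
    intro a ha b hb
    rw [hF a ha, hF b hb]
    exact intervalIntegral.integral_interval_sub_left (hint _ hhalf _ hb) (hint _ hhalf _ ha)
  -- F tends to infinity at 1⁻
  have hlogtop : Tendsto (fun x => -(C10⁻¹) * Real.log (1 - x)) (nhdsWithin 1 (Set.Iio 1)) atTop := by
    have h1 : Tendsto (fun x : ℝ => 1 - x) (nhdsWithin 1 (Set.Iio 1)) (nhdsWithin 0 (Set.Ioi 0)) := by
      rw [tendsto_nhdsWithin_iff]
      constructor
      · have h := Continuous.tendsto (by fun_prop : Continuous fun x : ℝ => 1 - x) 1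
        simp only [sub_self] at h
        exact h.mono_left nhdsWithin_le_nhds
      · filter_upwards [self_mem_nhdsWithin] with x hx
        simp only [Set.mem_Iio] at hx
        simp only [Set.mem_Ioi]
        linarith
    have h2 := Real.tendsto_log_nhdsGT_zero.comp h1
    have h3 : Tendsto (fun x => -Real.log (1 - x)) (nhdsWithin 1 (Set.Iio 1)) atTop :=
      tendsto_neg_atBot_atTop.comp h2
    have h4 := h3.const_mul_atTop (inv_pos.mpr hC10)
    refine h4.congr fun x => by ring
  have hFtop : Tendsto F (nhdsWithin 1 (Set.Iio 1)) atTop := by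
    have hφ : ∀ r ∈ Set.Ico (1/2:ℝ) 1,
        F (1/2) + (-(C10⁻¹) * Real.log (1 - r) - (-(C10⁻¹) * Real.log (1 - 1/2))) ≤ F r := by
      intro r hr
      have hrI : r ∈ Set.Ioo (0:ℝ) 1 := ⟨lt_of_lt_of_le (by norm_num) hr.1, hr.2⟩
      have hkey : (∫ η in (1/2:ℝ)..r, (C10 * (1 - η))⁻¹) ≤ ∫ η in (1/2:ℝ)..r, 1 / |u η| := by
        apply intervalIntegral.integral_mono_on hr.1
        · apply ContinuousOn.intervalIntegrable
          apply ContinuousOn.inv₀ (by fun_prop)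
          intro η hη
          rw [Set.uIcc_of_le hr.1] at hη
          have h1 : η < 1 := lt_of_le_of_lt hη.2 hr.2
          have h2 : (0:ℝ) < 1 - η := by linarith
          positivity
        · exact hint _ hhalf _ hrI
        · intro η hη
          have hη1 : η < 1 := lt_of_le_of_lt hη.2 hr.2
          have hη0 : 0 < η := lt_of_lt_of_le (by norm_num) hη.1
          have h1 : |u η| ≤ C10 * (1 - η) := by
            rw [huabs η ⟨hη0, hη1⟩]
            have := hu_lb η (Set.mem_Icc_of_Ioo ⟨hη0, hη1⟩)
            nlinarith [mul_nonneg (mul_nonneg hC10.le (by linarith : (0:ℝ) ≤ 1 - η))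
              (by linarith : (0:ℝ) ≤ 1 - η)]
          rw [inv_eq_one_div]
          exact one_div_le_one_div_of_le (huabs_pos η ⟨hη0, hη1⟩) h1
      have hFTC : (∫ η in (1/2:ℝ)..r, (C10 * (1 - η))⁻¹)
          = -(C10⁻¹) * Real.log (1 - r) - (-(C10⁻¹) * Real.log (1 - 1/2)) := by
        apply intervalIntegral.integral_eq_sub_of_hasDerivAt
        · intro x hx
          rw [Set.uIcc_of_le hr.1] at hx
          have hx1 : (0:ℝ) < 1 - x := by
            have : x < 1 := lt_of_le_of_lt hx.2 hr.2
            linarith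
          have h := (((hasDerivAt_id x).const_sub 1).log (ne_of_gt hx1)).const_mul (-(C10⁻¹))
          convert h using 1
          all_goals first | rfl | (simp only [id]; field_simp)
        · apply ContinuousOn.intervalIntegrable
          apply ContinuousOn.inv₀ (by fun_prop)
          intro η hη
          rw [Set.uIcc_of_le hr.1] at hη
          have h1 : η < 1 := lt_of_le_of_lt hη.2 hr.2
          have h2 : (0:ℝ) < 1 - η := by linarith
          positivity
      have hd := hFdiff _ hhalf _ hrI
      linarith [hkey, hFTC, hd]
    apply tendsto_atTop_mono' (nhdsWithin 1 (Set.Iio 1))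
      (f₁ := fun r => F (1/2) + (-(C10⁻¹) * Real.log (1 - r) - (-(C10⁻¹) * Real.log (1 - 1/2))))
    · filter_upwards [Ico_mem_nhdsLT_of_mem
        (by constructor <;> norm_num : (1:ℝ) ∈ Set.Ioc (1/2:ℝ) 1)] with r hr
      exact hφ r hr
    · have h := tendsto_atTop_add_const_right (nhdsWithin 1 (Set.Iio 1))
        (F (1/2) - (-(C10⁻¹) * Real.log (1 - 1/2))) hlogtop
      refine h.congr fun x => by ring
  -- Finv tends to 1 from the left at infinity
  have hFinvtop : Tendsto Finv atTop (nhdsWithin 1 (Set.Iio 1)) := by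
    rw [tendsto_nhdsWithin_iff]
    constructor
    · rw [tendsto_order]
      constructor
      · intro a ha
        set ρ : ℝ := max a (1/2) with hρdef
        have hρ1 : ρ < 1 := max_lt ha (by norm_num)
        have hρmem : ρ ∈ Set.Ioo (0:ℝ) 1 := ⟨lt_of_lt_of_le (by norm_num) (le_max_right _ _), hρ1⟩
        filter_upwards [Filter.eventually_gt_atTop (F ρ)] with x hx
        by_contra hcon
        push_neg at hcon
        have h1 : Finv x ≤ ρ := le_trans hcon (le_max_left _ _)
        have h2 : F (Finv x) ≤ F ρ :=
          hF_mono.monotoneOn (hFinv_mem x) hρmem h1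
        rw [hFinv_right x] at h2
        exact absurd h2 (not_le.mpr hx)
      · intro a ha
        exact Filter.Eventually.of_forall fun x => lt_trans (hFinv_mem x).2 ha
    · exact Filter.Eventually.of_forall fun x => (hFinv_mem x).2
  -- the correction function g and its bound
  set g : ℝ → ℝ := fun η => 1 / |u η| - 1 / (u1' * (1 - η)) with hgdef
  set K : ℝ := M / (C20 * r₂ * u1') with hKdef
  have hKpos : 0 < K := div_pos hM (by positivity)
  have hgbound : ∀ η ∈ Set.Ioo r₂ 1, |g η| ≤ K * (1 - η) ^ (β - 1) := by
    intro η hη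
    have hη0 : 0 < η := lt_trans hr₂0 hη.1
    have hηI : η ∈ Set.Ioo (0:ℝ) 1 := ⟨hη0, hη.2⟩
    have ht0 : (0:ℝ) < 1 - η := by linarith [hη.2]
    have ha0 : 0 < |u η| := huabs_pos η hηI
    have hb0 : 0 < u1' * (1 - η) := by positivity
    have halb : C20 * r₂ * (1 - η) ≤ |u η| := by
      rw [huabs η hηI]
      have h1 := hu_ub η (Set.mem_Icc_of_Ioo hηI)
      nlinarith [mul_nonneg (mul_pos hC20 ht0).le (sub_nonneg.mpr hη.1.le)]
    have hnum : abs (u1' * (1 - η) - |u η|) ≤ M * (1 - η) ^ (1 + β) := by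
      have hba : u1' * (1 - η) - |u η| = u η - u1' * (η - 1) := by
        rw [huabs η hηI]; ring
      rw [hba]
      exact hasymp η (le_trans hr₁r₂ hη.1.le) hη.2
    have hgeq : |g η| = abs (u1' * (1 - η) - |u η|) / (|u η| * (u1' * (1 - η))) := by
      have h : g η = (u1' * (1 - η) - |u η|) / (|u η| * (u1' * (1 - η))) := by
        simp only [hgdef]
        field_simp
      rw [h, abs_div, abs_of_pos (by positivity : (0:ℝ) < |u η| * (u1' * (1 - η)))]
    rw [hgeq]
    have hden : C20 * r₂ * u1' * ((1 - η) * (1 - η)) ≤ |u η| * (u1' * (1 - η)) := by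
      have h : C20 * r₂ * u1' * ((1 - η) * (1 - η)) = (C20 * r₂ * (1 - η)) * (u1' * (1 - η)) := by
        ring
      rw [h]
      exact mul_le_mul_of_nonneg_right halb hb0.le
    have hstep : abs (u1' * (1 - η) - |u η|) / (|u η| * (u1' * (1 - η)))
        ≤ (M * (1 - η) ^ (1 + β)) / (C20 * r₂ * u1' * ((1 - η) * (1 - η))) :=
      div_le_div₀ (by positivity) hnum (by positivity) hden
    refine hstep.trans (le_of_eq ?_)
    have hsplit : (1 - η) ^ (1 + β) = (1 - η) * (1 - η) * (1 - η) ^ (β - 1) := by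
      rw [show (1:ℝ) + β = 1 + 1 + (β - 1) by ring, Real.rpow_add ht0, Real.rpow_add ht0,
        Real.rpow_one]
    rw [hsplit, hKdef]
    field_simp
  -- integrability of the majorant
  have hmajor : IntervalIntegrable (fun η => K * (1 - η) ^ (β - 1)) volume r₂ 1 := by
    have h1 : IntervalIntegrable (fun x : ℝ => x ^ (β - 1)) volume (1 - r₂) (1 - 1) :=
      intervalIntegral.intervalIntegrable_rpow' (by linarith)
    have h2 := h1.comp_sub_left 1
    norm_num at h2
    exact h2.const_mul K
  -- integrability of g up to 1
  have hgint : IntegrableOn g (Set.Ioc r₂ 1) volume := by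
    have hmeas : AEStronglyMeasurable g (volume.restrict (Set.Ioc r₂ 1)) := by
      have hsub : Set.Ioc r₂ 1 ⊆ Set.Icc 0 1 := fun x hx => ⟨le_trans hr₂0.le hx.1.le, hx.2⟩
      have h1 : AEMeasurable u (volume.restrict (Set.Ioc r₂ 1)) :=
        (hucont.mono hsub).aemeasurable measurableSet_Ioc
      have h2 : AEMeasurable (fun η => 1 / |u η|) (volume.restrict (Set.Ioc r₂ 1)) := by
        simpa [one_div, Function.comp_def] using (continuous_abs.measurable.comp_aemeasurable h1)
      have h3 : Measurable (fun η : ℝ => 1 / (u1' * (1 - η))) := by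
        simp only [one_div]
        exact ((measurable_const.sub measurable_id).const_mul u1').inv
      exact (h2.sub h3.aemeasurable).aestronglyMeasurable
    apply Integrable.mono'
      ((intervalIntegrable_iff_integrableOn_Ioc_of_le hr₂1.le).mp hmajor) hmeas
    filter_upwards [ae_restrict_mem measurableSet_Ioc] with η hη
    rw [Real.norm_eq_abs]
    rcases eq_or_lt_of_le hη.2 with heq | hlt
    · rw [heq]
      have hg1 : g 1 = 0 := by simp [hgdef, hu1]
      rw [hg1, abs_zero]
      exact mul_nonneg hKpos.le (Real.rpow_nonneg (by norm_num) _)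
    · exact hgbound η ⟨hη.1, hlt⟩
  -- the primitive G and its limit at 1⁻
  set G : ℝ → ℝ := fun r => ∫ η in r₂..r, g η with hGdef
  have hGcont : ContinuousOn G (Set.Icc r₂ 1) := by
    have h := intervalIntegral.continuousOn_primitive_interval (a := r₂) (b := 1)
      (f := g) (μ := volume) ?_
    · rwa [Set.uIcc_of_le hr₂1.le] at h
    · rw [Set.uIcc_of_le hr₂1.le, integrableOn_Icc_iff_integrableOn_Ioc]
      exact hgint
  have hIccmem : Set.Icc r₂ 1 ∈ nhdsWithin 1 (Set.Iio 1) :=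
    mem_nhdsWithin.mpr ⟨Set.Ioi r₂, isOpen_Ioi, hr₂1, fun x hx => ⟨hx.1.le, hx.2.le⟩⟩
  have hGlim : Tendsto G (nhdsWithin 1 (Set.Iio 1)) (nhds (G 1)) := by
    have h1 : ContinuousWithinAt G (Set.Icc r₂ 1) 1 := hGcont 1 (Set.right_mem_Icc.mpr hr₂1.le)
    exact h1.mono_left (nhdsWithin_le_iff.mpr hIccmem)
  -- the log formula
  have hlog : ∀ r ∈ Set.Ico r₂ 1,
      Real.log (1 - r) = u1' * (F r₂ - F r + G r) + Real.log (1 - r₂) := by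
    intro r hr
    have hrI : r ∈ Set.Ioo (0:ℝ) 1 := ⟨lt_of_lt_of_le hr₂0 hr.1, hr.2⟩
    have hsub : Set.uIcc r₂ r ⊆ Set.Ioo 0 1 := Set.ordConnected_Ioo.uIcc_subset hr₂mem hrI
    have hint2 : IntervalIntegrable (fun η => 1 / (u1' * (1 - η))) volume r₂ r := by
      apply ContinuousOn.intervalIntegrable
      apply ContinuousOn.div continuousOn_const (by fun_prop)
      intro η hη
      have h1 : η < 1 := (hsub hη).2
      have h2 : (0:ℝ) < 1 - η := by linarith
      positivity
    have hint1 : IntervalIntegrable (fun η => 1 / |u η|) volume r₂ r := hint _ hr₂mem _ hrI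
    have hintg : IntervalIntegrable g volume r₂ r := by
      have := hint1.sub hint2
      simpa [hgdef] using this
    have hptwise : ∀ η, 1 / |u η| = g η + 1 / (u1' * (1 - η)) := fun η => by
      simp [hgdef]
    have hsplit : F r - F r₂ = G r + ∫ η in r₂..r, 1 / (u1' * (1 - η)) := by
      rw [hFdiff _ hr₂mem _ hrI]
      rw [intervalIntegral.integral_congr (g := fun η => g η + 1 / (u1' * (1 - η)))
        (fun x _ => hptwise x)]
      rw [intervalIntegral.integral_add hintg hint2]
    have hFTC2 : (∫ η in r₂..r, 1 / (u1' * (1 - η)))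
        = -(u1'⁻¹) * Real.log (1 - r) - (-(u1'⁻¹) * Real.log (1 - r₂)) := by
      apply intervalIntegral.integral_eq_sub_of_hasDerivAt
      · intro x hx
        rw [Set.uIcc_of_le hr.1] at hx
        have hx1 : (0:ℝ) < 1 - x := by
          have : x < 1 := lt_of_le_of_lt hx.2 hr.2
          linarith
        have h := (((hasDerivAt_id x).const_sub 1).log (ne_of_gt hx1)).const_mul (-(u1'⁻¹))
        convert h using 1
        all_goals first | rfl | (simp only [id]; field_simp)
      · exact hint2
    rw [hFTC2] at hsplit
    have hne : u1' ≠ 0 := ne_of_gt hu1'_pos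
    have h4 : u1'⁻¹ * Real.log (1 - r) = F r₂ - F r + G r + u1'⁻¹ * Real.log (1 - r₂) := by
      linarith [hsplit]
    calc Real.log (1 - r) = u1' * (u1'⁻¹ * Real.log (1 - r)) := by
          rw [← mul_assoc, mul_inv_cancel₀ hne, one_mul]
      _ = u1' * (F r₂ - F r + G r + u1'⁻¹ * Real.log (1 - r₂)) := by rw [h4]
      _ = u1' * (F r₂ - F r + G r) + u1' * (u1'⁻¹ * Real.log (1 - r₂)) := by ring
      _ = u1' * (F r₂ - F r + G r) + Real.log (1 - r₂) := by
          rw [← mul_assoc, mul_inv_cancel₀ hne, one_mul]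
  -- final assembly
  set s : ℝ → ℝ := fun r => Finv (F r - C) with hsdef
  have hstend : Tendsto s (nhdsWithin 1 (Set.Iio 1)) (nhdsWithin 1 (Set.Iio 1)) := by
    apply hFinvtop.comp
    have := tendsto_atTop_add_const_right (nhdsWithin 1 (Set.Iio 1)) (-C) hFtop
    simpa [sub_eq_add_neg] using this
  have hIoomem : Set.Ioo r₂ 1 ∈ nhdsWithin 1 (Set.Iio 1) :=
    mem_nhdsWithin.mpr ⟨Set.Ioi r₂, isOpen_Ioi, hr₂1, fun x hx => ⟨hx.1, hx.2⟩⟩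
  have hsev : ∀ᶠ r in nhdsWithin 1 (Set.Iio 1), s r ∈ Set.Ioo r₂ 1 := hstend.eventually hIoomem
  have hexp : Tendsto (fun r => u1' * (C + G (s r) - G r)) (nhdsWithin 1 (Set.Iio 1))
      (nhds (u1' * C)) := by
    have h1 : Tendsto (fun r => G (s r)) (nhdsWithin 1 (Set.Iio 1)) (nhds (G 1)) :=
      hGlim.comp hstend
    have h3 : Tendsto (fun r => C + G (s r) - G r) (nhdsWithin 1 (Set.Iio 1)) (nhds C) := by
      have h := ((tendsto_const_nhds (x := C) (f := nhdsWithin 1 (Set.Iio 1))).add h1).sub hGlim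
      simpa using h
    have := h3.const_mul u1'
    simpa using this
  have hmain : Tendsto (fun r => Real.exp (u1' * (C + G (s r) - G r)))
      (nhdsWithin 1 (Set.Iio 1)) (nhds (Real.exp (C * u1'))) := by
    have h := (Real.continuous_exp.tendsto (u1' * C)).comp hexp
    simpa [mul_comm, Function.comp_def] using h
  apply Filter.Tendsto.congr' _ hmain
  filter_upwards [hIoomem, hsev] with r hrmem hsrmem
  have hr1 : (0:ℝ) < 1 - r := by linarith [hrmem.2]
  have hs1 : (0:ℝ) < 1 - s r := by linarith [hsrmem.2]
  have hFs : F (s r) = F r - C := hFinv_right _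
  have hlr := hlog r ⟨hrmem.1.le, hrmem.2⟩
  have hls := hlog (s r) ⟨hsrmem.1.le, hsrmem.2⟩
  have hexpand : u1' * (C + G (s r) - G r) = Real.log (1 - s r) - Real.log (1 - r) := by
    rw [hls, hlr, hFs]
    ring
  rw [hexpand, Real.exp_sub, Real.exp_log hs1, Real.exp_log hr1]
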